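/- For any two network spaces (X, μ, c_X) and (Y, ν, c_Y), the three distances are ordered: GW(μ, ν) ≤ GM(μ, ν) ≤ RGM(μ, ν), where each infimum over an empty set is +∞. -/

import Mathlib

open MeasureTheory
open scoped ENNReal

/-- The Gromov–Wasserstein distance between network spaces: the infimum over all couplings
`γ` of `μ` and `ν` of the quadratic discrepancy of the cost functions; `⊤` if there is no
coupling. -/
noncomputable def GW {X Y : Type*} [MeasurableSpace X] [MeasurableSpace Y]
    (μ : Measure X) (ν : Measure Y) (cX : X → X → ℝ) (cY : Y → Y → ℝ) : ℝ≥0∞ :=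
  ⨅ γ : {γ : Measure (X × Y) // γ.map Prod.fst = μ ∧ γ.map Prod.snd = ν},
    (∫⁻ q, ENNReal.ofReal ((cX q.1.1 q.2.1 - cY q.1.2 q.2.2) ^ 2)
        ∂((γ : Measure (X × Y)).prod (γ : Measure (X × Y)))) ^ (1 / 2 : ℝ)

/-- The Gromov–Monge distance between network spaces: the infimum over all Borel measurable
transport maps `T` with `T_# μ = ν`; `⊤` if there is no such map. -/
noncomputable def GM {X Y : Type*} [MeasurableSpace X] [MeasurableSpace Y]
    (μ : Measure X) (ν : Measure Y) (cX : X → X → ℝ) (cY : Y → Y → ℝ) : ℝ≥0∞ :=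
  ⨅ T : {T : X → Y // Measurable T ∧ μ.map T = ν},
    (∫⁻ q : X × X, ENNReal.ofReal ((cX q.1 q.2 - cY (T.val q.1) (T.val q.2)) ^ 2)
        ∂(μ.prod μ)) ^ (1 / 2 : ℝ)

/-- The cost functional appearing in the reversible Gromov–Monge distance. -/
noncomputable def RGMcost {X Y : Type*} [MeasurableSpace X] [MeasurableSpace Y]
    (μ : Measure X) (ν : Measure Y) (cX : X → X → ℝ) (cY : Y → Y → ℝ)
    (F : X → Y) (B : Y → X) : ℝ≥0∞ :=
  (∫⁻ z, ENNReal.ofReal ((cX z.1 (B z.2) - cY (F z.1) z.2) ^ 2) ∂(μ.prod ν)) ^ (1 / 2 : ℝ)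

/-- The reversible Gromov–Monge (RGM) distance; the infimum over the empty family is `⊤`. -/
noncomputable def RGM {X Y : Type*} [MeasurableSpace X] [MeasurableSpace Y]
    (μ : Measure X) (ν : Measure Y) (cX : X → X → ℝ) (cY : Y → Y → ℝ) : ℝ≥0∞ :=
  ⨅ p : {p : (X → Y) × (Y → X) // Measurable p.1 ∧ Measurable p.2 ∧
      μ.map (fun x => (x, p.1 x)) = ν.map (fun y => (p.2 y, y))},
    RGMcost μ ν cX cY p.val.1 p.val.2

theorem gw_le_gm_le_rgm_aux_ae {X Y : Type*} [MeasurableSpace X] [MeasurableSpace Y]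
    [TopologicalSpace X] [T2Space X] [SecondCountableTopology X] [BorelSpace X]
    (μ : Measure X) (ν : Measure Y) [IsProbabilityMeasure μ] [IsProbabilityMeasure ν]
    (F : X → Y) (B : Y → X) (hF : Measurable F) (hB : Measurable B)
    (heq : μ.map (fun x => (x, F x)) = ν.map (fun y => (B y, y))) :
    (∀ᵐ x ∂μ, B (F x) = x) ∧ μ.map F = ν := by
  have hmF : Measurable fun x => (x, F x) := measurable_id.prodMk hF
  have hmB : Measurable fun y => (B y, y) := hB.prodMk measurable_id
  have hmBF : Measurable fun x => (x, B (F x)) := measurable_id.prodMk (hB.comp hF)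
  have hmd : Measurable fun x : X => (x, x) := measurable_id.prodMk measurable_id
  have hνB : ν.map B = μ := by
    have := congrArg (Measure.map Prod.fst) heq
    rw [Measure.map_map measurable_fst hmF,
      Measure.map_map measurable_fst hmB, show (Prod.fst ∘ fun x => (x, F x)) = id from rfl,
      show (Prod.fst ∘ fun y => (B y, y)) = B from rfl, Measure.map_id] at this
    exact this.symm
  have hμF : μ.map F = ν := by
    have := congrArg (Measure.map Prod.snd) heq
    rwa [Measure.map_map measurable_snd hmF,
      Measure.map_map measurable_snd hmB, show (Prod.snd ∘ fun x => (x, F x)) = F from rfl,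
      show (Prod.snd ∘ fun y => (B y, y)) = id from rfl, Measure.map_id] at this
  refine ⟨?_, hμF⟩
  have h2 := congrArg (Measure.map (fun q : X × Y => (q.1, B q.2))) heq
  have hg : Measurable fun q : X × Y => (q.1, B q.2) :=
    measurable_fst.prodMk (hB.comp measurable_snd)
  rw [Measure.map_map hg hmF, Measure.map_map hg hmB,
    show ((fun q : X × Y => (q.1, B q.2)) ∘ fun x => (x, F x)) = fun x => (x, B (F x)) from rfl,
    show ((fun q : X × Y => (q.1, B q.2)) ∘ fun y => (B y, y)) = fun y => (B y, B y) from rfl] at h2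
  have h3 : ν.map (fun y => (B y, B y)) = μ.map (fun x => (x, x)) := by
    rw [show (fun y => (B y, B y)) = (fun x : X => (x, x)) ∘ B from rfl,
      ← Measure.map_map hmd hB, hνB]
  rw [h3] at h2
  have hD : MeasurableSet {q : X × X | q.1 = q.2} := isClosed_diagonal.measurableSet
  have e1 : μ.map (fun x => (x, B (F x))) {q : X × X | q.1 = q.2} = μ {x | x = B (F x)} := by
    rw [Measure.map_apply hmBF hD]; rfl
  have e2 : μ.map (fun x : X => (x, x)) {q : X × X | q.1 = q.2} = 1 := by
    rw [Measure.map_apply hmd hD]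
    simp [measure_univ]
  have hfull : μ {x | x = B (F x)} = 1 := by rw [← e1, h2, e2]
  have hms : MeasurableSet {x | x = B (F x)} :=
    show MeasurableSet ((fun x => (x, B (F x))) ⁻¹' {q : X × X | q.1 = q.2}) from hmBF hD
  have hc : μ {x | x = B (F x)}ᶜ = 0 := by
    rw [measure_compl hms (by simp), hfull]; simp
  filter_upwards [(MeasureTheory.ae_iff (p := fun x => x = B (F x))).2 hc]
    with x hx using hx.symm

/-- For any two network spaces, `GW(μ, ν) ≤ GM(μ, ν) ≤ RGM(μ, ν)`. -/
theorem gw_le_gm_le_rgm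
    {X Y : Type*}
    [MetricSpace X] [CompleteSpace X] [SecondCountableTopology X]
    [MeasurableSpace X] [BorelSpace X]
    [MetricSpace Y] [CompleteSpace Y] [SecondCountableTopology Y]
    [MeasurableSpace Y] [BorelSpace Y]
    (μ : Measure X) (ν : Measure Y)
    [IsProbabilityMeasure μ] [IsProbabilityMeasure ν]
    [μ.IsOpenPosMeasure] [ν.IsOpenPosMeasure]
    (cX : X → X → ℝ) (cY : Y → Y → ℝ)
    (hcX : Measurable (Function.uncurry cX)) (hcY : Measurable (Function.uncurry cY)) :
    GW μ ν cX cY ≤ GM μ ν cX cY ∧ GM μ ν cX cY ≤ RGM μ ν cX cY := by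
  constructor
  · -- GW ≤ GM
    refine le_iInf fun T => ?_
    obtain ⟨T, hT, hTmap⟩ := T
    have hm : Measurable fun x => (x, T x) := measurable_id.prodMk hT
    have hfst : (μ.map fun x => (x, T x)).map Prod.fst = μ := by
      rw [Measure.map_map measurable_fst hm,
        show (Prod.fst ∘ fun x => (x, T x)) = id from rfl, Measure.map_id]
    have hsnd : (μ.map fun x => (x, T x)).map Prod.snd = ν := by
      rw [Measure.map_map measurable_snd hm,
        show (Prod.snd ∘ fun x => (x, T x)) = T from rfl, hTmap]
    refine le_trans (iInf_le _ ⟨μ.map fun x => (x, T x), hfst, hsnd⟩) (le_of_eq ?_)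
    congr 1
    have hprod : (μ.map fun x => (x, T x)).prod (μ.map fun x => (x, T x))
        = (μ.prod μ).map (Prod.map (fun x => (x, T x)) (fun x => (x, T x))) :=
      Measure.map_prod_map μ μ hm hm
    have hf : Measurable fun q : (X × Y) × (X × Y) =>
        ENNReal.ofReal ((cX q.1.1 q.2.1 - cY q.1.2 q.2.2) ^ 2) := by
      apply Measurable.ennreal_ofReal
      exact ((hcX.comp (measurable_fst.fst.prodMk measurable_snd.fst)).sub
        (hcY.comp (measurable_fst.snd.prodMk measurable_snd.snd))).pow_const 2
    rw [hprod, lintegral_map hf (hm.prodMap hm)]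
    rfl
  · -- GM ≤ RGM
    refine le_iInf fun p => ?_
    obtain ⟨⟨F, B⟩, hF, hB, heq⟩ := p
    obtain ⟨hae, hμF⟩ := gw_le_gm_le_rgm_aux_ae μ ν F B hF hB heq
    refine le_trans (iInf_le _ ⟨F, hF, hμF⟩) (le_of_eq ?_)
    unfold RGMcost
    congr 1
    have hprod : μ.prod ν = (μ.prod μ).map (Prod.map (id : X → X) F) := by
      have := Measure.map_prod_map μ μ (measurable_id : Measurable (id : X → X)) hF
      rw [Measure.map_id, hμF] at this
      exact this
    have hg : Measurable fun z : X × Y =>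
        ENNReal.ofReal ((cX z.1 (B z.2) - cY (F z.1) z.2) ^ 2) := by
      apply Measurable.ennreal_ofReal
      exact ((hcX.comp (measurable_fst.prodMk (hB.comp measurable_snd))).sub
        (hcY.comp ((hF.comp measurable_fst).prodMk measurable_snd))).pow_const 2
    rw [hprod, lintegral_map hg (measurable_id.prodMap hF)]
    refine lintegral_congr_ae ?_
    have hae2 : ∀ᵐ q ∂(μ.prod μ), B (F q.2) = q.2 := by
      rw [MeasureTheory.ae_iff]
      have hset : {q : X × X | ¬ B (F q.2) = q.2} = Set.univ ×ˢ {x | ¬ B (F x) = x} := by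
        ext q; simp [Set.mem_prod]
      rw [hset, Measure.prod_prod, measure_univ, one_mul]
      simpa [MeasureTheory.ae_iff] using hae
    filter_upwards [hae2] with q hq
    simp [Prod.map, hq]
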